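/- The color code automorphism group G contains exactly 6 elements of cycle type [2,2,2] (three disjoint transpositions), and each of them exchanges the color set {r,g,b} with the flavor set {x,y,z}. -/

import Mathlib

/-- Permutations of the six labels `{r,g,b,x,y,z}` (encoded as `0,...,5`) that fix the
flavor labels `x,y,z` (indices `3,4,5`) pointwise, hence permute the colors
`r,g,b` (indices `0,1,2`) arbitrarily. -/
def colorPerms : Set (Equiv.Perm (Fin 6)) := {g | ∀ i : Fin 6, 3 ≤ (i : ℕ) → g i = i}

/-- Permutations fixing the color labels `r,g,b` (indices `0,1,2`) pointwise,
hence permuting the flavors `x,y,z` arbitrarily. -/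
def flavorPerms : Set (Equiv.Perm (Fin 6)) := {g | ∀ i : Fin 6, (i : ℕ) < 3 → g i = i}

/-- The color-flavor swap `(r x)(g y)(b z)`. -/
def cfSwap : Equiv.Perm (Fin 6) := Equiv.swap 0 3 * Equiv.swap 1 4 * Equiv.swap 2 5

/-- The color code automorphism group: the subgroup of `S₆` generated by color
permutations, flavor permutations, and the color-flavor swap. -/
def ccAut : Subgroup (Equiv.Perm (Fin 6)) :=
  Subgroup.closure (colorPerms ∪ flavorPerms ∪ {cfSwap})

open Equiv

def BlockPred (g : Equiv.Perm (Fin 6)) : Prop :=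
  (∀ i : Fin 6, (i:ℕ) < 3 ↔ ((g i : ℕ) < 3)) ∨ (∀ i : Fin 6, (i:ℕ) < 3 ↔ ¬ ((g i : ℕ) < 3))

theorem Equiv.Perm.apply_inv_self_compat (f : Equiv.Perm (Fin 6)) (x : Fin 6) : f (f⁻¹ x) = x :=
  f.apply_symm_apply x

instance : DecidablePred BlockPred := fun g => by unfold BlockPred; infer_instance

def H : Subgroup (Equiv.Perm (Fin 6)) where
  carrier := {g | BlockPred g}
  one_mem' := Or.inl fun i => by simp
  mul_mem' := by
    rintro a b ha hb
    rcases ha with ha|ha <;> rcases hb with hb|hb <;> [left;right;right;left] <;> intro i <;>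
      have h1 := ha (b i) <;> have h2 := hb i <;> rw [Equiv.Perm.mul_apply] <;> tauto
  inv_mem' := by
    rintro a (ha | ha)
    · refine Or.inl fun i => ?_
      have := ha (a⁻¹ i)
      rw [Equiv.Perm.apply_inv_self_compat] at this
      exact this.symm
    · refine Or.inr fun i => ?_
      have := ha (a⁻¹ i)
      rw [Equiv.Perm.apply_inv_self_compat] at this
      tauto

/-- extend a block-preserving perm restricted to one block by the identity -/
def colorPart (g : Equiv.Perm (Fin 6)) (hp : ∀ i : Fin 6, (i:ℕ) < 3 ↔ ((g i : ℕ) < 3)) :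
    Equiv.Perm (Fin 6) where
  toFun i := if (i:ℕ) < 3 then g i else i
  invFun i := if (i:ℕ) < 3 then g⁻¹ i else i
  left_inv i := by
    by_cases h : (i:ℕ) < 3
    · simp [h, (hp i).mp h]
    · simp [h]
  right_inv i := by
    by_cases h : (i:ℕ) < 3
    · have h' : ((g⁻¹ i : Fin 6) : ℕ) < 3 := by
        have := hp (g⁻¹ i); rw [Equiv.Perm.apply_inv_self_compat] at this; exact this.mpr h
      simp only [Equiv.Perm.inv_def] at h'
      simp [h, h']
    · simp [h]

def flavorPart (g : Equiv.Perm (Fin 6)) (hp : ∀ i : Fin 6, (i:ℕ) < 3 ↔ ((g i : ℕ) < 3)) :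
    Equiv.Perm (Fin 6) where
  toFun i := if (i:ℕ) < 3 then i else g i
  invFun i := if (i:ℕ) < 3 then i else g⁻¹ i
  left_inv i := by
    by_cases h : (i:ℕ) < 3
    · simp [h]
    · have h' : ¬ ((g i : ℕ) < 3) := fun hc => h ((hp i).mpr hc)
      simp [h, h']
  right_inv i := by
    by_cases h : (i:ℕ) < 3
    · simp [h]
    · have h' : ¬ ((g⁻¹ i : Fin 6) : ℕ) < 3 := by
        intro hc
        have := (hp (g⁻¹ i)).mp hc
        rw [Equiv.Perm.apply_inv_self_compat] at this; exact h this
      simp only [Equiv.Perm.inv_def] at h'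
      simp [h, h']

lemma preserve_mem_ccAut (g : Equiv.Perm (Fin 6))
    (hp : ∀ i : Fin 6, (i:ℕ) < 3 ↔ ((g i : ℕ) < 3)) : g ∈ ccAut := by
  have hc : colorPart g hp ∈ ccAut := by
    apply Subgroup.subset_closure
    exact Or.inl (Or.inl (fun i hi => by simp [colorPart, Equiv.coe_fn_mk, Nat.not_lt.mpr hi]))
  have hf : flavorPart g hp ∈ ccAut := by
    apply Subgroup.subset_closure
    exact Or.inl (Or.inr (fun i hi => by simp [flavorPart, Equiv.coe_fn_mk, hi]))
  have : g = colorPart g hp * flavorPart g hp := by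
    ext i
    by_cases h : (i:ℕ) < 3
    · simp [Equiv.Perm.mul_apply, colorPart, flavorPart, h]
    · have h' : ¬ ((g i : ℕ) < 3) := fun hc => h ((hp i).mpr hc)
      simp [Equiv.Perm.mul_apply, colorPart, flavorPart, h, h']
  rw [this]
  exact mul_mem hc hf

lemma ccAut_eq_H : ccAut = H := by
  apply le_antisymm
  · rw [ccAut, Subgroup.closure_le]
    rintro g ((hg | hg) | hg)
    · refine Or.inl fun i => ⟨fun hi => ?_, fun hi => ?_⟩
      · by_contra hge
        have := hg (g i) (Nat.not_lt.mp hge)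
        have := g.injective this
        omega
      · by_contra hge
        have := hg i (Nat.not_lt.mp hge)
        rw [this] at hi; exact hge hi
    · refine Or.inl fun i => ⟨fun hi => by rw [hg i hi]; exact hi, fun hi => ?_⟩
      · by_contra hge
        have := hg (g i) hi
        have := g.injective this
        rw [← this] at hge; exact hge hi
    · rw [Set.mem_singleton_iff] at hg
      subst hg
      exact Or.inr (by decide)
  · rintro g (hg | hg)
    · exact preserve_mem_ccAut g hg
    · have hswap : cfSwap ∈ ccAut := Subgroup.subset_closure (Or.inr rfl)
      have hcf : ∀ i : Fin 6, (i:ℕ) < 3 ↔ ¬ ((cfSwap i : ℕ) < 3) := by decide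
      have hp : ∀ i : Fin 6, (i:ℕ) < 3 ↔ (((g * cfSwap) i : ℕ) < 3) := by
        intro i
        rw [Equiv.Perm.mul_apply]
        have h1 := hcf i
        have h2 := hg (cfSwap i)
        tauto
      have := mul_mem (preserve_mem_ccAut (g * cfSwap) hp) (inv_mem hswap)
      simpa using this

lemma ct222 (σ : Equiv.Perm (Fin 6)) :
    σ.cycleType = {2, 2, 2} ↔ σ * σ = 1 ∧ ∀ i, σ i ≠ i := by
  constructor
  · intro h
    have hlcm : σ.cycleType.lcm = orderOf σ := Equiv.Perm.lcm_cycleType σ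
    rw [h] at hlcm
    have h2 : orderOf σ = 2 := by rw [← hlcm]; decide
    constructor
    · have := pow_orderOf_eq_one σ
      rw [h2, pow_two] at this; exact this
    · have hsum := Equiv.Perm.sum_cycleType σ
      rw [h] at hsum
      have hcard : σ.support.card = 6 := by simpa using hsum.symm
      have huniv : σ.support = Finset.univ := Finset.eq_univ_of_card _ (by simp [hcard])
      intro i
      have : i ∈ σ.support := by rw [huniv]; exact Finset.mem_univ i
      exact Equiv.Perm.mem_support.mp this
  · rintro ⟨h2, hf⟩
    have hord : orderOf σ ∣ 2 := orderOf_dvd_of_pow_eq_one (by rw [pow_two]; exact h2)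
    have hall : ∀ n ∈ σ.cycleType, n = 2 := by
      intro n hn
      have h2le := Equiv.Perm.two_le_of_mem_cycleType hn
      have hdvd : n ∣ 2 := (Multiset.dvd_lcm hn).trans ((Equiv.Perm.lcm_cycleType σ) ▸ hord)
      have := Nat.le_of_dvd (by norm_num) hdvd
      omega
    have hrep : σ.cycleType = Multiset.replicate (Multiset.card σ.cycleType) 2 :=
      Multiset.eq_replicate_card.mpr hall
    have hsum := Equiv.Perm.sum_cycleType σ
    have huniv : σ.support = Finset.univ :=
      Finset.eq_univ_iff_forall.mpr fun i => Equiv.Perm.mem_support.mpr (hf i)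
    rw [huniv] at hsum
    rw [hrep, Multiset.sum_replicate, smul_eq_mul] at hsum
    have hcard6 : (Finset.univ : Finset (Fin 6)).card = 6 := by simp
    rw [hcard6] at hsum
    have : Multiset.card σ.cycleType = 3 := by omega
    rw [hrep, this]
    rfl

def P2 (g : Equiv.Perm (Fin 6)) : Prop := BlockPred g ∧ g * g = 1 ∧ ∀ i, g i ≠ i

instance : DecidablePred P2 := fun g => by unfold P2; infer_instance

set_option maxRecDepth 20000 in
lemma card_P2 : (Finset.univ.filter P2).card = 6 := by decide

set_option maxRecDepth 20000 in
lemma P2_swap : ∀ g : Equiv.Perm (Fin 6), P2 g →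
    ∀ i : Fin 6, (i : ℕ) < 3 ↔ ¬ ((g i : ℕ) < 3) := by decide


/-- `G` contains exactly 6 elements of cycle type `[2,2,2]` (three disjoint transpositions,
no fixed points), and each of them exchanges the color set `{r,g,b}` with the flavor set
`{x,y,z}`. -/
theorem ccAut_cycleType_222 :
    {g : Equiv.Perm (Fin 6) | g ∈ ccAut ∧ g.cycleType = {2, 2, 2}}.ncard = 6 ∧
      ∀ g ∈ ccAut, g.cycleType = {2, 2, 2} →
        ∀ i : Fin 6, (i : ℕ) < 3 ↔ ¬ ((g i : ℕ) < 3) := by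
  have hmem : ∀ g : Equiv.Perm (Fin 6), g ∈ ccAut ↔ BlockPred g := by
    intro g; rw [ccAut_eq_H]; rfl
  constructor
  · have hset : {g : Equiv.Perm (Fin 6) | g ∈ ccAut ∧ g.cycleType = {2, 2, 2}} =
        ↑(Finset.univ.filter P2) := by
      ext g
      simp only [Set.mem_setOf_eq, Finset.coe_filter, Finset.mem_univ, true_and, hmem g,
        ct222 g, P2]
    rw [hset, Set.ncard_coe_finset, card_P2]
  · intro g hg hct
    exact P2_swap g ⟨(hmem g).mp hg, (ct222 g).mp hct⟩
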